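/- If D is a class of compact objects in a triangulated category (with small coproducts) and D ⊥ C′ for some class C′ of objects, then D is orthogonal to the big extension-closure of C′. -/

import Mathlib

open CategoryTheory CategoryTheory.Limits CategoryTheory.Pretriangulated ZeroObject

universe v u

variable {C : Type u} [Category.{v} C] [Preadditive C] [HasZeroObject C]
  [HasShift C ℤ] [∀ n : ℤ, (shiftFunctor C n).Additive] [Pretriangulated C]

/-- The map `⊕ 1 − ⊕ φᵢ : ∐ Yᵢ ⟶ ∐ Yᵢ` whose cone is the homotopy colimit. -/
noncomputable def hocolimMap (Y : ℕ → C) (φ : ∀ i, Y i ⟶ Y (i + 1)) [HasCoproduct Y] :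
    (∐ Y) ⟶ ∐ Y :=
  Sigma.desc fun i => Sigma.ι Y i - φ i ≫ Sigma.ι Y (i + 1)

/-- `H` is a homotopy colimit of the sequence `(Y, φ)` if it is a cone of `hocolimMap Y φ`. -/
def IsHocolim (Y : ℕ → C) (φ : ∀ i, Y i ⟶ Y (i + 1)) [HasCoproduct Y] (H : C) : Prop :=
  ∃ (ι' : (∐ Y) ⟶ H) (π : H ⟶ (∐ Y)⟦(1 : ℤ)⟧),
    Triangle.mk (hocolimMap Y φ) ι' π ∈ distTriang C

/-- `Z` is a cone of the morphism `f`. -/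
def IsConeOf {A B : C} (f : A ⟶ B) (Z : C) : Prop :=
  ∃ (g : B ⟶ Z) (h : Z ⟶ A⟦(1 : ℤ)⟧), Triangle.mk f g h ∈ distTriang C

/-- A class of objects is strongly extension-closed if it contains `0` and contains all
homotopy colimits of sequences whose first term and all cones of connecting maps lie
in the class. -/
def IsStronglyExtClosed [HasCountableCoproducts C] (P : Set C) : Prop :=
  (0 : C) ∈ P ∧
    ∀ (Y : ℕ → C) (φ : ∀ i, Y i ⟶ Y (i + 1)) (H : C), IsHocolim Y φ H →
      Y 0 ∈ P → (∀ i, ∃ Z, IsConeOf (φ i) Z ∧ Z ∈ P) → H ∈ P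

/-- `X` is a retract of `Y`. -/
def IsRetractOf (X Y : C) : Prop :=
  ∃ (i : X ⟶ Y) (r : Y ⟶ X), i ≫ r = 𝟙 X

/-- A class of objects is closed under retracts. -/
def IsRetractClosed (P : Set C) : Prop :=
  ∀ X Y : C, IsRetractOf X Y → Y ∈ P → X ∈ P

/-- A class of objects is closed under arbitrary small coproducts. -/
def IsCoprodClosed [HasCoproducts.{v} C] (P : Set C) : Prop :=
  ∀ (ι : Type v) (Z : ι → C), (∀ i, Z i ∈ P) → (∐ Z) ∈ P

/-- The big extension-closure of a class `C'`: the smallest strongly extension-closed,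
retract-closed class containing `C'` and closed under arbitrary small coproducts. -/
def bigExtClosure [HasCoproducts.{v} C] (C' : Set C) : Set C :=
  ⋂₀ {P : Set C | C' ⊆ P ∧ IsStronglyExtClosed P ∧ IsRetractClosed P ∧ IsCoprodClosed P}

/-- The canonical homomorphism `⊕ᵢ Hom(c, Zᵢ) ⟶ Hom(c, ∐ Zᵢ)`. -/
noncomputable def coprodHom (c : C) (ι : Type v) [DecidableEq ι] (Z : ι → C) [HasCoproduct Z] :
    DirectSum ι (fun i => c ⟶ Z i) →+ (c ⟶ ∐ Z) :=
  DirectSum.toAddMonoid fun i =>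
    AddMonoidHom.mk' (fun f => f ≫ Sigma.ι Z i) (fun _ _ => Preadditive.add_comp _ _ _ _ _ _)

/-- An object is compact if `Hom(c, −)` commutes with all small coproducts:
the canonical map `⊕ᵢ Hom(c, Zᵢ) ⟶ Hom(c, ∐ Zᵢ)` is bijective. -/
def IsCompactObj (c : C) : Prop :=
  ∀ (ι : Type v) (_ : DecidableEq ι) (Z : ι → C) (_ : HasCoproduct Z),
    Function.Bijective (coprodHom c ι Z)

set_option linter.unusedSectionVars false

section Stmt6Aux

variable [HasCoproducts.{v} C]

noncomputable def shiftHomAux (d : C) (Z : ULift.{v} ℕ → C)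
    (ψ : ∀ n : ℕ, Z ⟨n⟩ ⟶ Z ⟨n + 1⟩) :
    DirectSum (ULift.{v} ℕ) (fun i => d ⟶ Z i) →+ DirectSum (ULift.{v} ℕ) (fun i => d ⟶ Z i) :=
  DirectSum.toAddMonoid fun i =>
    (DirectSum.of (fun j : ULift.{v} ℕ => d ⟶ Z j) ⟨i.down + 1⟩).comp
      (AddMonoidHom.mk' (fun f => f ≫ ψ i.down) fun _ _ => Preadditive.add_comp _ _ _ _ _ _)

lemma shiftHomAux_apply_zero (d : C) (Z : ULift.{v} ℕ → C) (ψ : ∀ n : ℕ, Z ⟨n⟩ ⟶ Z ⟨n + 1⟩)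
    (x : DirectSum (ULift.{v} ℕ) (fun i => d ⟶ Z i)) :
    shiftHomAux d Z ψ x ⟨0⟩ = 0 := by
  induction x using DirectSum.induction_on with
  | zero => simp
  | of i f =>
      rw [shiftHomAux, DirectSum.toAddMonoid_of, AddMonoidHom.comp_apply]
      exact DirectSum.of_eq_of_ne _ _ _ (by simp)
  | add x y hx hy => rw [map_add, DFinsupp.add_apply, hx, hy, add_zero]

lemma shiftHomAux_apply_succ (d : C) (Z : ULift.{v} ℕ → C) (ψ : ∀ n : ℕ, Z ⟨n⟩ ⟶ Z ⟨n + 1⟩)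
    (x : DirectSum (ULift.{v} ℕ) (fun i => d ⟶ Z i)) (n : ℕ) :
    shiftHomAux d Z ψ x ⟨n + 1⟩ = x ⟨n⟩ ≫ ψ n := by
  induction x using DirectSum.induction_on with
  | zero => simp
  | of i f =>
      rw [shiftHomAux, DirectSum.toAddMonoid_of, AddMonoidHom.comp_apply]
      by_cases hi : i = ⟨n⟩
      · subst hi
        rw [DirectSum.of_eq_same, DirectSum.of_eq_same]
        rfl
      · rw [DirectSum.of_eq_of_ne _ _ _ (fun h => hi (by cases i; cases congrArg ULift.down h; rfl)),
          DirectSum.of_eq_of_ne _ _ _ (Ne.symm hi), zero_comp]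
  | add x y hx hy =>
      rw [map_add, DFinsupp.add_apply, DFinsupp.add_apply, hx, hy, Preadditive.add_comp]

noncomputable def hocolimMapU (Z : ULift.{v} ℕ → C) (ψ : ∀ n : ℕ, Z ⟨n⟩ ⟶ Z ⟨n + 1⟩) :
    (∐ Z) ⟶ ∐ Z :=
  Sigma.desc fun i => Sigma.ι Z i - ψ i.down ≫ Sigma.ι Z ⟨i.down + 1⟩

lemma coprodHom_comp_hocolimMapU (d : C) (Z : ULift.{v} ℕ → C)
    (ψ : ∀ n : ℕ, Z ⟨n⟩ ⟶ Z ⟨n + 1⟩) (x : DirectSum (ULift.{v} ℕ) (fun i => d ⟶ Z i)) :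
    coprodHom d (ULift.{v} ℕ) Z x ≫ hocolimMapU Z ψ
      = coprodHom d (ULift.{v} ℕ) Z x - coprodHom d (ULift.{v} ℕ) Z (shiftHomAux d Z ψ x) := by
  induction x using DirectSum.induction_on with
  | zero => simp
  | of i f =>
      simp only [coprodHom, shiftHomAux, DirectSum.toAddMonoid_of, AddMonoidHom.comp_apply,
        AddMonoidHom.mk'_apply]
      simp [hocolimMapU, Preadditive.comp_sub]
  | add x y hx hy =>
      rw [map_add, Preadditive.add_comp, hx, hy, map_add, map_add]
      abel

lemma eq_zero_of_comp_hocolimMapU {d : C} (hd : IsCompactObj d) (Z : ULift.{v} ℕ → C)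
    (ψ : ∀ n : ℕ, Z ⟨n⟩ ⟶ Z ⟨n + 1⟩) (g : d ⟶ ∐ Z)
    (hg : g ≫ hocolimMapU Z ψ = 0) : g = 0 := by
  obtain ⟨x, rfl⟩ := (hd (ULift.{v} ℕ) inferInstance Z inferInstance).2 g
  rw [coprodHom_comp_hocolimMapU, sub_eq_zero] at hg
  have hx : x = shiftHomAux d Z ψ x := (hd (ULift.{v} ℕ) inferInstance Z inferInstance).1 hg
  have hz : ∀ n : ℕ, x ⟨n⟩ = 0 := by
    intro n
    induction n with
    | zero => rw [hx]; exact shiftHomAux_apply_zero d Z ψ x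
    | succ n ih => rw [hx, shiftHomAux_apply_succ, ih, zero_comp]
  have hx0 : x = 0 := DFinsupp.ext fun i => by
    cases i; rw [hz]; simp
  rw [hx0, map_zero]

lemma hom_coprod_eq_zero {d : C} (hd : IsCompactObj d) {ι : Type v} (Z : ι → C) [HasCoproduct Z]
    (hZ : ∀ i (f : d ⟶ Z i), f = 0) (f : d ⟶ ∐ Z) : f = 0 := by
  classical
  obtain ⟨x, rfl⟩ := (hd ι inferInstance Z inferInstance).2 f
  have hx0 : x = 0 := DFinsupp.ext fun i => by rw [hZ i (x i)]; simp
  rw [hx0, map_zero]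

lemma hom_coprod_nat_eq_zero {d : C} (hd : IsCompactObj d) (Y : ℕ → C) [HasCoproduct Y]
    (hY : ∀ i (f : d ⟶ Y i), f = 0) (f : d ⟶ ∐ Y) : f = 0 := by
  let Z : ULift.{v} ℕ → C := Y ∘ (Equiv.ulift (α := ℕ))
  let r : (∐ Z) ≅ ∐ Y := Sigma.reindex Equiv.ulift Y
  have h1 : f ≫ r.inv = 0 := hom_coprod_eq_zero hd Z (fun i g => hY i.down g) _
  have : f = (f ≫ r.inv) ≫ r.hom := by simp
  rw [this, h1, zero_comp]

lemma eq_zero_of_comp_hocolimMap {d : C} (hd : IsCompactObj d) (Y : ℕ → C)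
    (φ : ∀ i, Y i ⟶ Y (i + 1)) [HasCoproduct Y] (g : d ⟶ ∐ Y)
    (hg : g ≫ hocolimMap Y φ = 0) : g = 0 := by
  let Z : ULift.{v} ℕ → C := Y ∘ (Equiv.ulift (α := ℕ))
  let ψ : ∀ n : ℕ, Z ⟨n⟩ ⟶ Z ⟨n + 1⟩ := fun n => φ n
  let r : (∐ Z) ≅ ∐ Y := Sigma.reindex Equiv.ulift Y
  have hcomm : hocolimMapU Z ψ ≫ r.hom = r.hom ≫ hocolimMap Y φ := by
    ext ⟨i⟩
    simp only [hocolimMapU, hocolimMap, colimit.ι_desc_assoc, Cofan.mk_ι_app,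
      Preadditive.sub_comp, Category.assoc]
    rw [Sigma.ι_reindex_hom, Sigma.ι_reindex_hom, Sigma.ι_reindex_hom_assoc]
    simp [Preadditive.comp_sub]
    rfl
  have h2 : (g ≫ r.inv) ≫ hocolimMapU Z ψ = 0 := by
    have : r.inv ≫ hocolimMapU Z ψ = hocolimMap Y φ ≫ r.inv := by
      rw [Iso.inv_comp_eq, ← Category.assoc, ← hcomm, Category.assoc, Iso.hom_inv_id,
        Category.comp_id]
    rw [Category.assoc, this, ← Category.assoc, hg, zero_comp]
  have h1 : g ≫ r.inv = 0 := eq_zero_of_comp_hocolimMapU hd Z ψ _ h2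
  have : g = (g ≫ r.inv) ≫ r.hom := by simp
  rw [this, h1, zero_comp]

lemma eq_zero_of_comp_shift_hocolimMap {d : C} (hd : IsCompactObj d) (Y : ℕ → C)
    (φ : ∀ i, Y i ⟶ Y (i + 1)) [HasCoproduct Y] (g : d ⟶ (∐ Y)⟦(1 : ℤ)⟧)
    (hg : g ≫ (hocolimMap Y φ)⟦(1 : ℤ)⟧' = 0) : g = 0 := by
  have hcomm : hocolimMap (fun i => (Y i)⟦(1 : ℤ)⟧) (fun i => (φ i)⟦(1 : ℤ)⟧') ≫
        sigmaComparison (shiftFunctor C (1 : ℤ)) Y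
      = sigmaComparison (shiftFunctor C (1 : ℤ)) Y ≫ (hocolimMap Y φ)⟦(1 : ℤ)⟧' := by
    rw [show (hocolimMap Y φ)⟦(1 : ℤ)⟧' = (shiftFunctor C (1 : ℤ)).map (Sigma.desc fun i =>
      Sigma.ι Y i - φ i ≫ Sigma.ι Y (i + 1)) from rfl, sigmaComparison_map_desc]
    rw [hocolimMap]
    ext i
    simp only [colimit.ι_desc_assoc, colimit.ι_desc, Cofan.mk_ι_app, Preadditive.sub_comp,
      Category.assoc, ι_comp_sigmaComparison, Functor.map_sub, Functor.map_comp]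
  set e := sigmaComparison (shiftFunctor C (1 : ℤ)) Y with he
  have h2 : (g ≫ inv e) ≫ hocolimMap (fun i => (Y i)⟦(1 : ℤ)⟧) (fun i => (φ i)⟦(1 : ℤ)⟧') = 0 := by
    have hie : inv e ≫ hocolimMap (fun i => (Y i)⟦(1 : ℤ)⟧) (fun i => (φ i)⟦(1 : ℤ)⟧')
        = (hocolimMap Y φ)⟦(1 : ℤ)⟧' ≫ inv e := by
      rw [IsIso.inv_comp_eq, ← Category.assoc, ← hcomm, Category.assoc, IsIso.hom_inv_id,
        Category.comp_id]
    rw [Category.assoc, hie, ← Category.assoc, hg, zero_comp]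
  have h1 : g ≫ inv e = 0 := eq_zero_of_comp_hocolimMap hd _ _ _ h2
  have hge : g = (g ≫ inv e) ≫ e := by simp
  rw [hge, h1, zero_comp]

end Stmt6Aux


/-- If `D` consists of compact objects and `D ⊥ C'`, then `D` is orthogonal to the big
extension-closure of `C'`. -/
theorem stmt6 [HasCoproducts.{v} C] (C' D : Set C)
    (hD : ∀ d ∈ D, IsCompactObj d)
    (h : ∀ d ∈ D, ∀ c ∈ C', ∀ f : d ⟶ c, f = 0) :
    ∀ d ∈ D, ∀ c ∈ bigExtClosure C', ∀ f : d ⟶ c, f = 0 := by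
  intro d hd c hc f
  set P : Set C := {c | ∀ f : d ⟶ c, f = 0} with hP
  have hcompact := hD d hd
  have hPmem : P ∈ {P : Set C | C' ⊆ P ∧ IsStronglyExtClosed P ∧ IsRetractClosed P ∧
      IsCoprodClosed P} := by
    refine ⟨fun c hc f => h d hd c hc f, ⟨fun f => (isZero_zero C).eq_of_tgt f 0, ?_⟩,
      ?_, ?_⟩
    · intro Y φ H hH hY0 hcones
      obtain ⟨ι', π, hT⟩ := hH
      have hYall : ∀ i (f : d ⟶ Y i), f = 0 := by
        intro i
        induction i with
        | zero => exact hY0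
        | succ i ih =>
            intro f
            obtain ⟨Z, ⟨g, hh, hTZ⟩, hZP⟩ := hcones i
            obtain ⟨g', hg'⟩ := Triangle.coyoneda_exact₂ _ hTZ f (hZP (f ≫ g))
            rw [hg', ih g']; exact zero_comp
      intro f
      have hπ : f ≫ π = 0 := by
        apply eq_zero_of_comp_shift_hocolimMap hcompact Y φ
        rw [Category.assoc]
        have := comp_distTriang_mor_zero₃₁ _ hT
        rw [show π ≫ (hocolimMap Y φ)⟦(1 : ℤ)⟧' = 0 from this, comp_zero]
      obtain ⟨g, hg⟩ := Triangle.coyoneda_exact₃ _ hT f hπ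
      have hg0 : g = 0 := hom_coprod_nat_eq_zero hcompact Y hYall g
      rw [hg, hg0]; exact zero_comp
    · rintro X Y ⟨i, r, hir⟩ hYP f
      have : f = (f ≫ i) ≫ r := by rw [Category.assoc, hir, Category.comp_id]
      rw [this, hYP (f ≫ i), zero_comp]
    · intro ι Z hZ f
      exact hom_coprod_eq_zero hcompact Z (fun i g => hZ i g) f
  exact hc P hPmem f
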